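/- Let x₀ ∈ C and let σ, L, γ > 0 be constants such that ‖J(x)‖ ≤ σ for all x ∈ C ∩ S(x₀), ‖J(y) − J(x)‖ ≤ L‖y − x‖ for all x, y ∈ C with L(x, y) ⊆ S(x₀), and set L_f := σ² + L‖F(x₀)‖. Let {x_k} ⊆ C and {λ_k} ⊆ (0, ∞) be sequences starting at x₀ such that for every k ≥ 0, f(x_{k+1}) ≤ m^k_{λ_k}(x_{k+1}) (where m^k denotes the model at x_k) and m^k_{λ_k}(x_{k+1}) − m^k_{λ_k}(x_k) ≤ −D_γ(x_k). Then for every ε > 0, every η ≥ max{γ, L_f}, and every positive integer K ≥ 8η f(x₀)/ε², there exists k < K such that P_η(x_k) is an ε-stationary point of min_{x ∈ C} f(x). -/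

import Mathlib

open scoped RealInnerProductSpace
open Set Filter Topology

set_option maxHeartbeats 1000000

/-- The gradient of f(x) = (1/2)‖F(x)‖², namely ∇f(x) = J(x)ᵀ F(x). -/
noncomputable def gradf {d n : ℕ}
    (F : EuclideanSpace ℝ (Fin d) → EuclideanSpace ℝ (Fin n))
    (x : EuclideanSpace ℝ (Fin d)) : EuclideanSpace ℝ (Fin d) :=
  ContinuousLinearMap.adjoint (fderiv ℝ F x) (F x)

theorem gradf_hasFDerivAt {d n : ℕ} (F : EuclideanSpace ℝ (Fin d) → EuclideanSpace ℝ (Fin n))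
    (hF : ContDiff ℝ 1 F) (x : EuclideanSpace ℝ (Fin d)) :
    HasFDerivAt (fun z => (1/2 : ℝ) * ‖F z‖ ^ 2) ((innerSL ℝ) (gradf F x)) x := by
  have hd : HasFDerivAt F (fderiv ℝ F x) x := (hF.differentiable one_ne_zero x).hasFDerivAt
  have h1 := hd.inner ℝ hd
  have h2 : HasFDerivAt (fun z => (1/2:ℝ) * ⟪F z, F z⟫)
      ((1/2:ℝ) • ((fderivInnerCLM ℝ (F x, F x)).comp ((fderiv ℝ F x).prod (fderiv ℝ F x)))) x :=
    h1.const_mul _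
  have hfeq : (fun z => (1/2 : ℝ) * ‖F z‖ ^ 2) = fun z => (1/2:ℝ) * ⟪F z, F z⟫ := by
    funext z; rw [real_inner_self_eq_norm_sq]
  rw [hfeq]
  refine h2.congr_fderiv ?_
  ext v
  simp only [innerSL_apply_apply, ContinuousLinearMap.smul_apply, ContinuousLinearMap.comp_apply,
    ContinuousLinearMap.prod_apply, fderivInnerCLM_apply, gradf,
    ContinuousLinearMap.adjoint_inner_left, smul_eq_mul]
  rw [real_inner_comm (F x) ((fderiv ℝ F x) v)]
  ring


theorem aux_grad_lip {d n : ℕ} (F : EuclideanSpace ℝ (Fin d) → EuclideanSpace ℝ (Fin n))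
    (hF : ContDiff ℝ 1 F) {a b : EuclideanSpace ℝ (Fin d)} (σ L Mf : ℝ)
    (hσ : 0 ≤ σ)
    (hJb : ‖fderiv ℝ F b‖ ≤ σ)
    (hFab : ‖F b - F a‖ ≤ σ * ‖b - a‖)
    (hLip : ‖fderiv ℝ F b - fderiv ℝ F a‖ ≤ L * ‖b - a‖)
    (hFa : ‖F a‖ ≤ Mf) :
    ‖gradf F b - gradf F a‖ ≤ (σ ^ 2 + L * Mf) * ‖b - a‖ := by
  set Ja := fderiv ℝ F a
  set Jb := fderiv ℝ F b
  have e : gradf F b - gradf F a =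
      (ContinuousLinearMap.adjoint Jb) (F b - F a)
      + (ContinuousLinearMap.adjoint (Jb - Ja)) (F a) := by
    simp only [gradf, map_sub, ContinuousLinearMap.sub_apply]
    abel
  rw [e]
  have h1 : ‖(ContinuousLinearMap.adjoint Jb) (F b - F a)‖ ≤ σ * (σ * ‖b - a‖) := by
    calc ‖(ContinuousLinearMap.adjoint Jb) (F b - F a)‖
        ≤ ‖ContinuousLinearMap.adjoint Jb‖ * ‖F b - F a‖ :=
          (ContinuousLinearMap.adjoint Jb).le_opNorm _
      _ ≤ σ * (σ * ‖b - a‖) := by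
          rw [ContinuousLinearMap.adjoint.norm_map]
          exact mul_le_mul hJb hFab (norm_nonneg _) hσ
  have h2 : ‖(ContinuousLinearMap.adjoint (Jb - Ja)) (F a)‖ ≤ L * ‖b - a‖ * Mf := by
    calc ‖(ContinuousLinearMap.adjoint (Jb - Ja)) (F a)‖
        ≤ ‖ContinuousLinearMap.adjoint (Jb - Ja)‖ * ‖F a‖ :=
          (ContinuousLinearMap.adjoint (Jb - Ja)).le_opNorm _
      _ ≤ L * ‖b - a‖ * Mf := by
          rw [ContinuousLinearMap.adjoint.norm_map]
          exact mul_le_mul hLip hFa (norm_nonneg _)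
            (le_trans (norm_nonneg _) hLip)
  calc ‖_ + _‖ ≤ _ := norm_add_le _ _
    _ ≤ σ * (σ * ‖b - a‖) + L * ‖b - a‖ * Mf := add_le_add h1 h2
    _ = (σ ^ 2 + L * Mf) * ‖b - a‖ := by ring

theorem aux_descent {d n : ℕ} (F : EuclideanSpace ℝ (Fin d) → EuclideanSpace ℝ (Fin n))
    (hF : ContDiff ℝ 1 F) {a b : EuclideanSpace ℝ (Fin d)} (M : ℝ)
    (hLip : ∀ z ∈ segment ℝ a b, ‖gradf F z - gradf F a‖ ≤ M) :
    (1/2 : ℝ) * ‖F b‖ ^ 2 ≤ (1/2 : ℝ) * ‖F a‖ ^ 2 + ⟪gradf F a, b - a⟫ + M * ‖b - a‖ := by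
  set g : EuclideanSpace ℝ (Fin d) → ℝ :=
    fun z => (1/2 : ℝ) * ‖F z‖ ^ 2 - ⟪gradf F a, z⟫ with hg
  have hmvt : ‖g b - g a‖ ≤ M * ‖b - a‖ := by
    apply (convex_segment a b).norm_image_sub_le_of_norm_hasFDerivWithin_le
      (f' := fun z => (innerSL ℝ) (gradf F z) - (innerSL ℝ) (gradf F a))
      (fun z _ => ((gradf_hasFDerivAt F hF z).sub
        ((innerSL ℝ (gradf F a)).hasFDerivAt)).hasFDerivWithinAt)
      (fun z hz => ?_) (left_mem_segment ℝ a b) (right_mem_segment ℝ a b)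
    show ‖(innerSL ℝ) (gradf F z) - (innerSL ℝ) (gradf F a)‖ ≤ M
    rw [← map_sub (innerSL ℝ), innerSL_apply_norm]
    exact hLip z hz
  have h1 : g b - g a ≤ M * ‖b - a‖ := le_trans (le_abs_self _) hmvt
  have h2 : ⟪gradf F a, b⟫ - ⟪gradf F a, a⟫ = ⟪gradf F a, b - a⟫ := by
    rw [inner_sub_right]
  simp only [hg] at h1
  linarith [h1]

theorem aux_VI {d : ℕ} (C : Set (EuclideanSpace ℝ (Fin d))) (hC : Convex ℝ C)
    (g xx p : EuclideanSpace ℝ (Fin d)) (η : ℝ) (hη : 0 < η) (hp : p ∈ C)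
    (hmin : ∀ y ∈ C, ⟪g, p - xx⟫ + (η/2) * ‖p - xx‖ ^ 2 ≤ ⟪g, y - xx⟫ + (η/2) * ‖y - xx‖ ^ 2)
    {y : EuclideanSpace ℝ (Fin d)} (hy : y ∈ C) :
    0 ≤ ⟪g, y - p⟫ + η * ⟪p - xx, y - p⟫ := by
  set c : ℝ := ⟪g, y - p⟫ + η * ⟪p - xx, y - p⟫ with hc
  set K : ℝ := ‖y - p‖ ^ 2 with hK
  have key : ∀ t : ℝ, 0 < t → t ≤ 1 → 0 ≤ t * c + η * t ^ 2 / 2 * K := by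
    intro t ht0 ht1
    have hz : p + t • (y - p) ∈ C := by
      have := hC hp hy (by linarith : (0:ℝ) ≤ 1 - t) (le_of_lt ht0) (by ring)
      convert this using 1
      module
    have := hmin _ hz
    have e1 : p + t • (y - p) - xx = (p - xx) + t • (y - p) := by abel
    rw [e1, inner_add_right, inner_smul_right, norm_add_sq_real, inner_smul_right,
      norm_smul] at this
    simp only [Real.norm_eq_abs, abs_of_pos ht0] at this
    have e2 : ⟪g, p - xx⟫ + t * ⟪g, y - p⟫ + η / 2 * (‖p - xx‖ ^ 2 + 2 * (t * ⟪p - xx, y - p⟫)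
        + (t * ‖y - p‖) ^ 2) - (⟪g, p - xx⟫ + η / 2 * ‖p - xx‖ ^ 2)
        = t * c + η * t ^ 2 / 2 * K := by rw [hc, hK]; ring
    linarith [this, e2.symm.le]
  by_contra hcon
  push_neg at hcon
  have hK0 : 0 < K := by
    rcases eq_or_lt_of_le (by positivity : (0:ℝ) ≤ K) with h | h
    · exfalso
      have : y - p = 0 := by
        have : ‖y - p‖ = 0 := by
          have := h.symm
          nlinarith [norm_nonneg (y - p)]
        simpa using this
      rw [hc, this] at hcon
      simp at hcon
    · exact h
  set t : ℝ := min 1 (-c / (η * K)) with htdef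
  have ht0 : 0 < t := lt_min one_pos (div_pos (by linarith) (by positivity))
  have ht1 : t ≤ 1 := min_le_left _ _
  have ht2 : t ≤ -c / (η * K) := min_le_right _ _
  have := key t ht0 ht1
  have h3 : t * (η * K) ≤ -c := (le_div_iff₀ (mul_pos hη hK0)).mp ht2
  have h4 : t * (t * (η * K)) ≤ t * (-c) := mul_le_mul_of_nonneg_left h3 ht0.le
  nlinarith [this, h4, mul_pos ht0 (mul_pos hη hK0)]

theorem aux_F_lip {d n : ℕ} (F : EuclideanSpace ℝ (Fin d) → EuclideanSpace ℝ (Fin n))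
    (hF : ContDiff ℝ 1 F) (T : Set (EuclideanSpace ℝ (Fin d))) (hT : Convex ℝ T) (σ : ℝ)
    (hJ : ∀ z ∈ T, ‖fderiv ℝ F z‖ ≤ σ) {a b : EuclideanSpace ℝ (Fin d)}
    (ha : a ∈ T) (hb : b ∈ T) : ‖F b - F a‖ ≤ σ * ‖b - a‖ :=
  hT.norm_image_sub_le_of_norm_hasFDerivWithin_le
    (fun z _ => (hF.differentiable one_ne_zero z).hasFDerivAt.hasFDerivWithinAt) hJ ha hb



set_option maxHeartbeats 1000000 in
theorem aux_invariant {d n : ℕ} (F : EuclideanSpace ℝ (Fin d) → EuclideanSpace ℝ (Fin n))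
    (hF : ContDiff ℝ 1 F) (f : EuclideanSpace ℝ (Fin d) → ℝ)
    (hf : ∀ z, f z = (1/2 : ℝ) * ‖F z‖ ^ 2)
    (C : Set (EuclideanSpace ℝ (Fin d))) (hCconvex : Convex ℝ C)
    (c0 σ L MF η : ℝ) (hσ : 0 < σ) (hL : 0 < L) (hMF0 : 0 ≤ MF)
    (hJ : ∀ z ∈ C ∩ {w | f w ≤ c0}, ‖fderiv ℝ F z‖ ≤ σ)
    (hJLip : ∀ z ∈ C, ∀ w ∈ C, segment ℝ z w ⊆ {v | f v ≤ c0} →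
      ‖fderiv ℝ F w - fderiv ℝ F z‖ ≤ L * ‖w - z‖)
    (hMF : ∀ w, f w ≤ c0 → ‖F w‖ ≤ MF)
    (hLfη : σ ^ 2 + L * MF ≤ η)
    {a p : EuclideanSpace ℝ (Fin d)} (ha : a ∈ C) (hp : p ∈ C) (hfa : f a ≤ c0)
    (hinner : ⟪gradf F a, p - a⟫ ≤ -(η * ‖p - a‖ ^ 2)) :
    ∀ θ ∈ Set.Icc (0:ℝ) 1, f (a + θ • (p - a)) ≤ f a := by
  have hLfpos : 0 < σ ^ 2 + L * MF := by positivity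
  have hηpos : 0 < η := lt_of_lt_of_le hLfpos hLfη
  set Lf := σ ^ 2 + L * MF with hLf
  set v := p - a with hv
  -- trivial case
  by_cases hv0 : v = 0
  · intro θ _; rw [hv0]; simp
  have hvpos : 0 < ‖v‖ := norm_pos_iff.mpr hv0
  -- continuity of f
  have hfc : Continuous f := by
    have : f = fun z => (1/2 : ℝ) * ‖F z‖ ^ 2 := funext hf
    rw [this]
    exact continuous_const.mul ((hF.continuous.norm).pow 2)
  set φ : ℝ → ℝ := fun θ => f (a + θ • v) with hφ
  have hφc : Continuous φ := hfc.comp (continuous_const.add (continuous_id.smul continuous_const))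
  have hφ0 : φ 0 = f a := by simp [hφ]
  -- membership of segment points in C
  have hmemC : ∀ s : ℝ, 0 ≤ s → s ≤ 1 → a + s • v ∈ C := by
    intro s h0 h1
    have := hCconvex ha hp (by linarith : (0:ℝ) ≤ 1 - s) h0 (by ring)
    convert this using 1
    rw [hv]; module
  -- descent inequality on admissible subsegments
  have hdesc : ∀ b' : EuclideanSpace ℝ (Fin d), segment ℝ a b' ⊆ C ∩ {w | f w ≤ c0} →
      f b' ≤ f a + ⟪gradf F a, b' - a⟫ + Lf * ‖b' - a‖ ^ 2 := by
    intro b' hsub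
    have hgl : ∀ z ∈ segment ℝ a b', ‖gradf F z - gradf F a‖ ≤ Lf * ‖b' - a‖ := by
      intro z hz
      have hzC : z ∈ C ∩ {w | f w ≤ c0} := hsub hz
      have haC : a ∈ C ∩ {w | f w ≤ c0} := hsub (left_mem_segment ℝ a b')
      have hzlen : ‖z - a‖ ≤ ‖b' - a‖ := by
        rw [segment_eq_image'] at hz
        obtain ⟨t, ht, rfl⟩ := hz
        simp only [add_sub_cancel_left, norm_smul, Real.norm_eq_abs, abs_of_nonneg ht.1]
        nlinarith [norm_nonneg (b' - a), ht.1, ht.2]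
      have h1 : ‖gradf F z - gradf F a‖ ≤ Lf * ‖z - a‖ := by
        apply aux_grad_lip F hF σ L MF hσ.le (hJ z hzC)
        · exact aux_F_lip F hF (segment ℝ a b') (convex_segment a b') σ
            (fun w hw => hJ w (hsub hw)) (left_mem_segment ℝ a b') hz
        · apply hJLip a haC.1 z hzC.1
          intro w hw
          exact (hsub ((convex_segment a b').segment_subset (left_mem_segment ℝ a b') hz hw)).2
        · exact hMF a haC.2
      exact h1.trans (by nlinarith [hLfpos])
    have := aux_descent F hF (Lf * ‖b' - a‖) hgl
    rw [← hf, ← hf] at this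
    calc f b' ≤ f a + ⟪gradf F a, b' - a⟫ + Lf * ‖b' - a‖ * ‖b' - a‖ := this
      _ = f a + ⟪gradf F a, b' - a⟫ + Lf * ‖b' - a‖ ^ 2 := by ring
  -- the sup argument
  set A : Set ℝ := {θ | θ ∈ Set.Icc (0:ℝ) 1 ∧ ∀ s ∈ Set.Icc 0 θ, φ s ≤ φ 0} with hA
  have hA0 : (0:ℝ) ∈ A := by
    constructor
    · exact ⟨le_refl 0, zero_le_one⟩
    · intro s hs
      have : s = 0 := le_antisymm hs.2 hs.1
      rw [this]
  have hAbdd : BddAbove A := ⟨1, fun θ hθ => hθ.1.2⟩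
  have hAne : A.Nonempty := ⟨0, hA0⟩
  set θs := sSup A with hθs
  have hθs0 : 0 ≤ θs := le_csSup hAbdd hA0
  have hθs1 : θs ≤ 1 := csSup_le hAne (fun θ hθ => hθ.1.2)
  have hlt : ∀ s : ℝ, 0 ≤ s → s < θs → φ s ≤ φ 0 := by
    intro s h0 hsθ
    obtain ⟨θ, hθA, hsθ'⟩ := exists_lt_of_lt_csSup hAne hsθ
    exact hθA.2 s ⟨h0, hsθ'.le⟩
  have hφθs : φ θs ≤ φ 0 := by
    rcases eq_or_lt_of_le hθs0 with h | h
    · rw [← h]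
    · refine le_of_tendsto ((hφc.tendsto θs).mono_left (nhdsWithin_le_nhds (s := Set.Iio θs))) ?_
      filter_upwards [Ioo_mem_nhdsLT h] with s hs
      exact hlt s hs.1.le hs.2
  have hθsA : θs ∈ A := by
    refine ⟨⟨hθs0, hθs1⟩, fun s hs => ?_⟩
    rcases lt_or_eq_of_le hs.2 with h | h
    · exact hlt s hs.1 h
    · rw [h]; exact hφθs
  -- descent bound at θs
  have hsegsub : ∀ θ : ℝ, 0 ≤ θ → θ ≤ θs → segment ℝ a (a + θ • v) ⊆ C ∩ {w | f w ≤ c0} := by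
    intro θ h0 hθ z hz
    rw [segment_eq_image'] at hz
    obtain ⟨t, ht, rfl⟩ := hz
    simp only [add_sub_cancel_left, smul_smul] at *
    have htθ0 : 0 ≤ t * θ := mul_nonneg ht.1 h0
    have htθ : t * θ ≤ θs := le_trans (by nlinarith [ht.1, ht.2]) hθ
    refine ⟨hmemC _ htθ0 (htθ.trans hθs1), ?_⟩
    have := hθsA.2 (t * θ) ⟨htθ0, htθ⟩
    rw [hφ0] at this
    exact le_trans this hfa
  have hdescθ : ∀ θ : ℝ, 0 ≤ θ → θ ≤ θs →
      φ θ ≤ φ 0 - θ * η * ‖v‖ ^ 2 + Lf * θ ^ 2 * ‖v‖ ^ 2 := by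
    intro θ h0 hθ
    have := hdesc (a + θ • v) (hsegsub θ h0 hθ)
    simp only [add_sub_cancel_left] at this
    rw [inner_smul_right, norm_smul] at this
    simp only [Real.norm_eq_abs, abs_of_nonneg h0] at this
    have h2 : θ * ⟪gradf F a, v⟫ ≤ θ * (-(η * ‖v‖ ^ 2)) := by
      exact mul_le_mul_of_nonneg_left hinner h0
    rw [hφ, hφ0] at *
    calc f (a + θ • v) ≤ f a + θ * ⟪gradf F a, v⟫ + Lf * (θ * ‖v‖) ^ 2 := this
      _ ≤ f a - θ * η * ‖v‖ ^ 2 + Lf * θ ^ 2 * ‖v‖ ^ 2 := by nlinarith [h2]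
  -- θs = 1
  have hθseq : θs = 1 := by
    by_contra hne
    have hθslt : θs < 1 := lt_of_le_of_ne hθs1 hne
    rcases eq_or_lt_of_le hθs0 with hz | hz
    · -- θs = 0 : derivative argument
      have hfd : HasFDerivAt f ((innerSL ℝ) (gradf F a)) a := by
        have : f = fun z => (1/2 : ℝ) * ‖F z‖ ^ 2 := funext hf
        rw [this]; exact gradf_hasFDerivAt F hF a
      have hline : HasDerivAt (fun θ : ℝ => a + θ • v) v 0 := by
        simpa using ((hasDerivAt_id (0:ℝ)).smul_const v).const_add a
      have hfd' : HasFDerivAt f ((innerSL ℝ) (gradf F a)) ((fun θ : ℝ => a + θ • v) 0) := by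
        simpa using hfd
      have hφd : HasDerivAt φ ⟪gradf F a, v⟫ 0 := by
        have h := hfd'.comp_hasDerivAt (0:ℝ) hline
        simpa [hφ, Function.comp_def] using h
      have hneg : ⟪gradf F a, v⟫ < 0 := lt_of_le_of_lt hinner (neg_lt_zero.mpr (by positivity))
      have hsl : Tendsto (slope φ 0) (𝓝[>] 0) (𝓝 ⟪gradf F a, v⟫) :=
        (hasDerivAt_iff_tendsto_slope.mp hφd).mono_left
          (nhdsWithin_mono 0 (fun s hs => ne_of_gt hs))
      have hevt : ∀ᶠ s in 𝓝[>] (0:ℝ), slope φ 0 s < 0 := hsl.eventually_lt_const hneg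
      obtain ⟨u, hu, husub⟩ := mem_nhdsGT_iff_exists_Ioo_subset.mp hevt
      have hu0 : (0:ℝ) < u := hu
      have hstep : ∀ s : ℝ, 0 < s → s < u → φ s < φ 0 := by
        intro s h0 h1
        have := husub ⟨h0, h1⟩
        simp only [Set.mem_setOf_eq, slope_def_field] at this
        have h2 : (φ s - φ 0) / s < 0 := by simpa using this
        have := (div_neg_iff.mp h2)
        rcases this with ⟨h3, _⟩ | ⟨h3, h4⟩
        · linarith [h3, h0]
        · linarith
      set θ' : ℝ := min 1 (u / 2) with hθ'
      have hθ'pos : 0 < θ' := lt_min one_pos (by linarith)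
      have hθ'A : θ' ∈ A := by
        refine ⟨⟨hθ'pos.le, min_le_left _ _⟩, fun s hs => ?_⟩
        rcases eq_or_lt_of_le hs.1 with h | h
        · rw [← h]
        · exact (hstep s h (lt_of_le_of_lt (hs.2.trans (min_le_right _ _)) (by linarith))).le
      have := le_csSup hAbdd hθ'A
      rw [← hθs] at this
      linarith [hθ'pos, hz, this]
    · -- θs > 0 : strict decrease + continuity
      have hstrict : φ θs < φ 0 := by
        have := hdescθ θs hθs0 le_rfl
        have hkey : θs * Lf < η := by nlinarith [hLfpos]
        nlinarith [hvpos, mul_pos hz (mul_pos hηpos (mul_pos hvpos hvpos))]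
      have hevt : ∀ᶠ s in 𝓝 θs, φ s < φ 0 := (hφc.tendsto θs).eventually_lt_const hstrict
      obtain ⟨δ, hδ, hball⟩ := Metric.eventually_nhds_iff.mp hevt
      set θ' : ℝ := min 1 (θs + δ / 2) with hθ'
      have hθ'A : θ' ∈ A := by
        refine ⟨⟨le_min (by linarith) (by linarith), min_le_left _ _⟩, fun s hs => ?_⟩
        rcases le_or_gt s θs with h | h
        · exact hθsA.2 s ⟨hs.1, h⟩
        · have hdist : dist s θs < δ := by
            rw [Real.dist_eq, abs_of_pos (by linarith)]
            have : s ≤ θs + δ / 2 := hs.2.trans (min_le_right _ _)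
            linarith
          exact (hball hdist).le
      have hle := le_csSup hAbdd hθ'A
      rw [← hθs] at hle
      have : θs < θ' := lt_min (by linarith) (by linarith)
      linarith
  intro θ hθ
  rw [← hφ0]
  have := hθsA.2 θ (by rw [hθseq]; exact hθ)
  simpa [hφ] using this

/-- Global O(ε⁻²) iteration complexity of the LM method for
constrained problems.  For each k, `pγ k = P_γ(x_k)` is the projected-gradient
minimizer defining D_γ(x_k) = −(⟪∇f(x_k), pγ k − x_k⟫ + (γ/2)‖pγ k − x_k‖²),
and `pη k = P_η(x_k)`.  The conclusion asserts that some `pη k` with `k < K` is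
an ε-stationary point of min_{x ∈ C} f(x). -/
theorem stmt_11 {d n : ℕ}
    (F : EuclideanSpace ℝ (Fin d) → EuclideanSpace ℝ (Fin n))
    (hF : ContDiff ℝ 1 F)
    (f : EuclideanSpace ℝ (Fin d) → ℝ)
    (hf : ∀ z, f z = (1 / 2) * ‖F z‖ ^ 2)
    (C : Set (EuclideanSpace ℝ (Fin d)))
    (hCne : C.Nonempty) (hCclosed : IsClosed C) (hCconvex : Convex ℝ C)
    (x : ℕ → EuclideanSpace ℝ (Fin d)) (hxC : ∀ k, x k ∈ C)
    (σ L γ : ℝ) (hσ : 0 < σ) (hL : 0 < L) (hγ : 0 < γ)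
    (hJ : ∀ z ∈ C ∩ {w | f w ≤ f (x 0)}, ‖fderiv ℝ F z‖ ≤ σ)
    (hJLip : ∀ z ∈ C, ∀ w ∈ C, segment ℝ z w ⊆ {v | f v ≤ f (x 0)} →
      ‖fderiv ℝ F w - fderiv ℝ F z‖ ≤ L * ‖w - z‖)
    (Lf : ℝ) (hLfdef : Lf = σ ^ 2 + L * ‖F (x 0)‖)
    (lam : ℕ → ℝ) (hlam : ∀ k, 0 < lam k)
    (m : ℕ → EuclideanSpace ℝ (Fin d) → ℝ)
    (hm : ∀ k y, m k y =
      (1 / 2) * ‖F (x k) + fderiv ℝ F (x k) (y - x k)‖ ^ 2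
      + (lam k / 2) * ‖y - x k‖ ^ 2)
    (pγ : ℕ → EuclideanSpace ℝ (Fin d)) (hpγC : ∀ k, pγ k ∈ C)
    (hpγmin : ∀ k, ∀ y ∈ C,
      ⟪gradf F (x k), pγ k - x k⟫ + (γ / 2) * ‖pγ k - x k‖ ^ 2 ≤
      ⟪gradf F (x k), y - x k⟫ + (γ / 2) * ‖y - x k‖ ^ 2)
    (hmaj : ∀ k, f (x (k + 1)) ≤ m k (x (k + 1)))
    (hdec : ∀ k, m k (x (k + 1)) - m k (x k) ≤
      -(-(⟪gradf F (x k), pγ k - x k⟫ + (γ / 2) * ‖pγ k - x k‖ ^ 2)))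
    (η : ℝ) (hη : max γ Lf ≤ η)
    (pη : ℕ → EuclideanSpace ℝ (Fin d)) (hpηC : ∀ k, pη k ∈ C)
    (hpηmin : ∀ k, ∀ y ∈ C,
      ⟪gradf F (x k), pη k - x k⟫ + (η / 2) * ‖pη k - x k‖ ^ 2 ≤
      ⟪gradf F (x k), y - x k⟫ + (η / 2) * ‖y - x k‖ ^ 2)
    (ε : ℝ) (hε : 0 < ε)
    (K : ℕ) (hK0 : 0 < K) (hK : 8 * η * f (x 0) / ε ^ 2 ≤ K) :
    ∃ k < K, ∀ y ∈ C, ⟪gradf F (pη k), y - pη k⟫ ≥ -ε * ‖y - pη k‖ := by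
  have hηγ : γ ≤ η := le_trans (le_max_left _ _) hη
  have hηLf : Lf ≤ η := le_trans (le_max_right _ _) hη
  have hηpos : 0 < η := lt_of_lt_of_le hγ hηγ
  have hLfpos : 0 < Lf := by rw [hLfdef]; positivity
  have hf0 : ∀ z, 0 ≤ f z := fun z => by rw [hf]; positivity
  have hMF : ∀ w, f w ≤ f (x 0) → ‖F w‖ ≤ ‖F (x 0)‖ := by
    intro w hw
    rw [hf, hf] at hw
    nlinarith [norm_nonneg (F w), norm_nonneg (F (x 0))]
  set D : ℕ → ℝ := fun k => -(⟪gradf F (x k), pγ k - x k⟫ + (γ / 2) * ‖pγ k - x k‖ ^ 2)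
    with hD
  have hD0 : ∀ k, 0 ≤ D k := by
    intro k
    have := hpγmin k (x k) (hxC k)
    simp only [sub_self, inner_zero_right, norm_zero] at this
    rw [hD]
    simp only
    nlinarith [this]
  have hmk : ∀ k, m k (x k) = f (x k) := by
    intro k
    rw [hm, hf]
    simp
  have hstep : ∀ k, f (x (k + 1)) + D k ≤ f (x k) := by
    intro k
    have h1 := hmaj k
    have h2 := hdec k
    rw [hmk k] at h2
    rw [hD]
    simp only
    linarith
  have hmono : ∀ k, f (x k) ≤ f (x 0) := by
    intro k
    induction k with
    | zero => exact le_refl _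
    | succ j ih => linarith [hstep j, hD0 j]
  have hsum : ∀ K' : ℕ, f (x K') + ∑ i ∈ Finset.range K', D i ≤ f (x 0) := by
    intro K'
    induction K' with
    | zero => simp
    | succ j ih =>
      rw [Finset.sum_range_succ]
      linarith [hstep j]
  have hεη : 0 < ε ^ 2 / (8 * η) := by positivity
  obtain ⟨k, hkK, hDk⟩ : ∃ k < K, D k ≤ ε ^ 2 / (8 * η) := by
    by_contra hcon
    push_neg at hcon
    have hlt : ∑ i ∈ Finset.range K, (ε ^ 2 / (8 * η)) < ∑ i ∈ Finset.range K, D i := by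
      apply Finset.sum_lt_sum_of_nonempty
      · exact Finset.nonempty_range_iff.mpr (by omega)
      · intro i hi
        exact hcon i (Finset.mem_range.mp hi)
    have hsumconst : ∑ i ∈ Finset.range K, (ε ^ 2 / (8 * η)) = K * (ε ^ 2 / (8 * η)) := by
      rw [Finset.sum_const, Finset.card_range, nsmul_eq_mul]
    have hub : ∑ i ∈ Finset.range K, D i ≤ f (x 0) := by
      have := hsum K
      linarith [hf0 (x K)]
    have hfb : f (x 0) ≤ K * (ε ^ 2 / (8 * η)) := by
      have hK' : 8 * η * f (x 0) ≤ K * ε ^ 2 := by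
        rw [div_le_iff₀ (by positivity : (0:ℝ) < ε ^ 2)] at hK
        linarith [hK]
      rw [← mul_div_assoc, le_div_iff₀ (by positivity : (0:ℝ) < 8 * η)]
      linarith
    rw [hsumconst] at hlt
    linarith
  refine ⟨k, hkK, ?_⟩
  -- variational inequality for η
  have hVIη : ∀ y ∈ C, 0 ≤ ⟪gradf F (x k), y - pη k⟫ + η * ⟪pη k - x k, y - pη k⟫ := by
    intro y hy
    exact aux_VI C hCconvex (gradf F (x k)) (x k) (pη k) η hηpos (hpηC k) (hpηmin k) hy
  have hgv : ⟪gradf F (x k), pη k - x k⟫ ≤ -(η * ‖pη k - x k‖ ^ 2) := by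
    have h := hVIη (x k) (hxC k)
    have e1 : x k - pη k = -(pη k - x k) := by abel
    rw [e1, inner_neg_right, inner_neg_right, real_inner_self_eq_norm_sq] at h
    nlinarith [h]
  -- bound on the norm of the step
  have hDη2 : (γ / 2 : ℝ) * ‖pγ k - x k‖ ^ 2 + ⟪gradf F (x k), pγ k - x k⟫ ≤
      ⟪gradf F (x k), pη k - x k⟫ + (η / 2) * ‖pη k - x k‖ ^ 2 := by
    have h1 := hpγmin k (pη k) (hpηC k)
    have h2 : (γ / 2 : ℝ) * ‖pη k - x k‖ ^ 2 ≤ (η / 2) * ‖pη k - x k‖ ^ 2 := by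
      nlinarith [sq_nonneg ‖pη k - x k‖]
    linarith [h1, h2]
  have hvsq : ‖pη k - x k‖ ^ 2 ≤ ε ^ 2 / (4 * η ^ 2) := by
    have h3 : (η / 2) * ‖pη k - x k‖ ^ 2 ≤ D k := by
      have hDkeq : D k = -(⟪gradf F (x k), pγ k - x k⟫ + (γ / 2) * ‖pγ k - x k‖ ^ 2) := rfl
      rw [hDkeq]
      nlinarith [hDη2, hgv]
    have h4 : (η / 2) * ‖pη k - x k‖ ^ 2 ≤ ε ^ 2 / (8 * η) := le_trans h3 hDk
    rw [le_div_iff₀ (by positivity : (0:ℝ) < 8 * η)] at h4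
    rw [le_div_iff₀ (by positivity : (0:ℝ) < 4 * η ^ 2)]
    nlinarith [h4]
  have hvnorm : ‖pη k - x k‖ ≤ ε / (2 * η) := by
    have h5 : (ε / (2 * η)) ^ 2 = ε ^ 2 / (4 * η ^ 2) := by
      field_simp; ring
    nlinarith [norm_nonneg (pη k - x k), div_pos hε (by positivity : (0:ℝ) < 2 * η), hvsq]
  -- segment invariance
  have hinv : ∀ θ ∈ Set.Icc (0:ℝ) 1, f (x k + θ • (pη k - x k)) ≤ f (x k) := by
    apply aux_invariant F hF f hf C hCconvex (f (x 0)) σ L (‖F (x 0)‖) η hσ hL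
      (norm_nonneg _) hJ hJLip hMF (by rw [hLfdef] at hηLf; exact hηLf)
      (hxC k) (hpηC k) (hmono k)
    exact hgv
  have hpηS : f (pη k) ≤ f (x 0) := by
    have := hinv 1 ⟨zero_le_one, le_refl 1⟩
    simp only [one_smul, add_sub_cancel] at this
    exact le_trans this (hmono k)
  have hsegsub : segment ℝ (x k) (pη k) ⊆ C ∩ {w | f w ≤ f (x 0)} := by
    intro z hz
    rw [segment_eq_image'] at hz
    obtain ⟨t, ht, rfl⟩ := hz
    constructor
    · have := hCconvex (hxC k) (hpηC k) (by linarith [ht.2] : (0:ℝ) ≤ 1 - t) ht.1 (by ring)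
      convert this using 1
      module
    · exact le_trans (hinv t ht) (hmono k)
  -- gradient Lipschitz bound on [x k, pη k]
  have hgl : ‖gradf F (pη k) - gradf F (x k)‖ ≤ Lf * ‖pη k - x k‖ := by
    rw [hLfdef]
    apply aux_grad_lip F hF σ L (‖F (x 0)‖) hσ.le
    · exact hJ (pη k) ⟨hpηC k, hpηS⟩
    · exact aux_F_lip F hF (segment ℝ (x k) (pη k)) (convex_segment (x k) (pη k)) σ
        (fun w hw => hJ w (hsegsub hw)) (left_mem_segment ℝ (x k) (pη k))
        (right_mem_segment ℝ (x k) (pη k))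
    · exact hJLip (x k) (hxC k) (pη k) (hpηC k) (fun w hw => (hsegsub hw).2)
    · exact hMF (x k) (hmono k)
  -- final estimate
  intro y hy
  have hVI := hVIη y hy
  have h1 : ⟪gradf F (pη k), y - pη k⟫ =
      ⟪gradf F (pη k) - gradf F (x k), y - pη k⟫ + ⟪gradf F (x k), y - pη k⟫ := by
    rw [inner_sub_left]; ring
  have h2 : -(Lf * ‖pη k - x k‖ * ‖y - pη k‖) ≤ ⟪gradf F (pη k) - gradf F (x k), y - pη k⟫ := by
    have hcs := abs_real_inner_le_norm (gradf F (pη k) - gradf F (x k)) (y - pη k)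
    have hmm := mul_le_mul_of_nonneg_right hgl (norm_nonneg (y - pη k))
    have habs := abs_le.mp hcs
    linarith [habs.1, hmm]
  have h3 : -(η * (‖pη k - x k‖ * ‖y - pη k‖)) ≤ ⟪gradf F (x k), y - pη k⟫ := by
    have hcs := abs_real_inner_le_norm (pη k - x k) (y - pη k)
    have habs := abs_le.mp hcs
    have hmm : η * ⟪pη k - x k, y - pη k⟫ ≤ η * (‖pη k - x k‖ * ‖y - pη k‖) :=
      mul_le_mul_of_nonneg_left habs.2 hηpos.le
    linarith [hVI, hmm]
  have h4 : (Lf + η) * ‖pη k - x k‖ ≤ ε := by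
    calc (Lf + η) * ‖pη k - x k‖ ≤ (2 * η) * (ε / (2 * η)) :=
          mul_le_mul (by linarith) hvnorm (norm_nonneg _) (by positivity)
      _ = ε := by field_simp
  have h5 : (Lf + η) * ‖pη k - x k‖ * ‖y - pη k‖ ≤ ε * ‖y - pη k‖ :=
    mul_le_mul_of_nonneg_right h4 (norm_nonneg _)
  rw [ge_iff_le, neg_mul, h1]
  nlinarith [h2, h3, h5]
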